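/- Suppose (x*, y*) is a saddle-point of f and assume the parameter conditions (PC). Then for every k ∈ ℕ: (1/(2τ_{k+1}))‖x* − x^{k+1}‖² + (1/(2σ_{k+1}) − ‖K‖²·τ_k/2)‖y* − y^{k+1}‖² + ∑_{i=0}^{k−1} (1/(2τ_i) − ‖K‖)‖x^i − x^{i+1}‖² + ∑_{i=0}^{k} (1/(2σ_i) − ‖K‖)‖y^i − y^{i+1}‖² ≤ (1/(2τ₀))‖x* − x⁰‖² + (1/(2σ₀))‖y* − y⁰‖². -/
import Mathlib


open RealInnerProductSpace

lemma aux_inner_sq {H : Type*} [NormedAddCommGroup H] [InnerProductSpace ℝ H]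
    (u v w : H) : ⟪u - w, v - w⟫ = (‖u-w‖^2 + ‖v-w‖^2 - ‖u-v‖^2)/2 := by
  have h1 : u - v = (u-w) - (v-w) := by abel
  have h2 : ‖(u-w)-(v-w)‖^2 = ‖u-w‖^2 - 2*⟪u-w,v-w⟫ + ‖v-w‖^2 := norm_sub_sq_real _ _
  rw [h1]; linarith

lemma aux_opnorm {H₁ H₂ : Type*} [NormedAddCommGroup H₁] [InnerProductSpace ℝ H₁]
    [NormedAddCommGroup H₂] [InnerProductSpace ℝ H₂]
    (K : H₁ →L[ℝ] H₂) (u : H₁) (v : H₂) : ⟪K u, v⟫ ≤ ‖K‖*‖u‖*‖v‖ := by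
  calc ⟪K u, v⟫ ≤ ‖K u‖*‖v‖ := real_inner_le_norm _ _
  _ ≤ ‖K‖*‖u‖*‖v‖ := mul_le_mul_of_nonneg_right (K.le_opNorm u) (norm_nonneg v)

lemma aux_young (t L a b : ℝ) (ht : 0 < t) : L*a*b ≤ 1/(2*t)*a^2 + L^2*t/2*b^2 := by
  have hne : t ≠ 0 := ne_of_gt ht
  have h : 1/(2*t)*a^2 + L^2*t/2*b^2 - L*a*b = 1/(2*t)*(a - L*t*b)^2 := by
    field_simp; ring
  nlinarith [mul_nonneg (by positivity : (0:ℝ) ≤ 1/(2*t)) (sq_nonneg (a - L*t*b))]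

set_option maxHeartbeats 1600000 in
/-- Theorem 4.14(i): Fejér-type estimate at a saddle-point under the parameter conditions (PC).  Here `αs i` models
the shifted family `α_{i-1}`, so the extrapolation update for `x̄^{k+1}` uses
`αs (k+1) = α_k`, and (PC) reads `‖K‖·(1 − αs i)² = 1/σ_i − 1/σ_{i+1}`. -/
theorem stmt_16
    {H₁ : Type*} [NormedAddCommGroup H₁] [InnerProductSpace ℝ H₁] [CompleteSpace H₁]
    {H₂ : Type*} [NormedAddCommGroup H₂] [InnerProductSpace ℝ H₂] [CompleteSpace H₂]
    (X : Set H₁) (Y : Set H₂)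
    (hXne : X.Nonempty) (hXcl : IsClosed X) (hXcv : Convex ℝ X)
    (hYne : Y.Nonempty) (hYcl : IsClosed Y) (hYcv : Convex ℝ Y)
    (K : H₁ →L[ℝ] H₂) (g : H₁ → ℝ) (h : H₂ → ℝ)
    (hg : ConvexOn ℝ Set.univ g) (hglsc : LowerSemicontinuous g)
    (hh : ConvexOn ℝ Set.univ h) (hhlsc : LowerSemicontinuous h)
    (f : H₁ → H₂ → ℝ)
    (hf : ∀ x y, f x y = ⟪K x, y⟫ + g x - h y)
    (xs : ℕ → H₁) (ys : ℕ → H₂) (hxX : ∀ k, xs k ∈ X) (hyY : ∀ k, ys k ∈ Y)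
    (τs σs : ℕ → ℝ) (hτ : ∀ k, 0 < τs k) (hσ : ∀ k, 0 < σs k)
    (αs βs : ℕ → ℝ) (hα : ∀ k, 0 ≤ αs k) (hβ : ∀ k, 0 ≤ βs k)
    (xbs : ℕ → H₁) (ybs : ℕ → H₂)
    (hxb0 : xbs 0 = xs 0)
    (hxbS : ∀ k, xbs (k+1) = xs (k+1) + αs (k+1) • (xs (k+1) - xs k))
    (hyb0 : ybs 0 = ys 0)
    (hybS : ∀ k, ybs (k+1) = ys (k+1) + βs k • (ys (k+1) - ys k))
    (hiterx : ∀ k, ∀ x ∈ X,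
      ⟪(τs k)⁻¹ • (xs k - xs (k+1)) - (ContinuousLinearMap.adjoint K) (ybs (k+1)),
        x - xs (k+1)⟫ + g (xs (k+1)) ≤ g x)
    (hitery : ∀ k, ∀ y ∈ Y,
      ⟪(σs k)⁻¹ • (ys k - ys (k+1)) + K (xbs k), y - ys (k+1)⟫ + h (ys (k+1)) ≤ h y)
    (hPCβ : ∀ i, ‖K‖ * (βs i)^2 = 1/(τs i) - 1/(τs (i+1)))
    (hPCα : ∀ i, ‖K‖ * (1 - αs i)^2 = 1/(σs i) - 1/(σs (i+1)))
    (xstar : H₁) (ystar : H₂) (hxstar : xstar ∈ X) (hystar : ystar ∈ Y)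
    (hsaddle : ∀ x ∈ X, ∀ y ∈ Y, f xstar y ≤ f xstar ystar ∧ f xstar ystar ≤ f x ystar)
    (k : ℕ) :
    (1/(2*τs (k+1))) * ‖xstar - xs (k+1)‖^2
      + (1/(2*σs (k+1)) - ‖K‖^2 * τs k / 2) * ‖ystar - ys (k+1)‖^2
      + ∑ i ∈ Finset.range k, (1/(2*τs i) - ‖K‖) * ‖xs i - xs (i+1)‖^2
      + ∑ i ∈ Finset.range (k+1), (1/(2*σs i) - ‖K‖) * ‖ys i - ys (i+1)‖^2
    ≤ (1/(2*τs 0)) * ‖xstar - xs 0‖^2 + (1/(2*σs 0)) * ‖ystar - ys 0‖^2 := by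
  have hL : (0:ℝ) ≤ ‖K‖ := norm_nonneg _
  have hhalf : ∀ t : ℝ, 1/(2*t) = (1/t)/2 := by
    intro t; rw [one_div, mul_inv, one_div]; ring
  have hpcτ : ∀ i, 1/(2*τs (i+1)) = 1/(2*τs i) - ‖K‖*(βs i)^2/2 := by
    intro i; have := hPCβ i; rw [hhalf, hhalf]; linarith
  have hpcσ : ∀ i, 1/(2*σs (i+1)) = 1/(2*σs i) - ‖K‖*(1-αs i)^2/2 := by
    intro i; have := hPCα i; rw [hhalf, hhalf]; linarith
  -- per-step basic inequality
  have key : ∀ i,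
      (1/(2*τs i)) * (‖xstar - xs (i+1)‖^2 + ‖xs i - xs (i+1)‖^2 - ‖xstar - xs i‖^2)
      + (1/(2*σs i)) * (‖ystar - ys (i+1)‖^2 + ‖ys i - ys (i+1)‖^2 - ‖ystar - ys i‖^2)
      ≤ ⟪K (xbs i - xs (i+1)), ys (i+1) - ystar⟫
        + βs i * ⟪K (xstar - xs (i+1)), ys (i+1) - ys i⟫ := by
    intro i
    have h1 := hiterx i xstar hxstar
    have h2 := hitery i ystar hystar
    rw [inner_sub_left, real_inner_smul_left, ContinuousLinearMap.adjoint_inner_left] at h1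
    rw [inner_add_left, real_inner_smul_left] at h2
    have hcomm : ⟪ybs (i+1), K (xstar - xs (i+1))⟫ = ⟪K (xstar - xs (i+1)), ybs (i+1)⟫ :=
      real_inner_comm _ _
    rw [hcomm] at h1
    -- saddle point
    have hs1 := (hsaddle (xs (i+1)) (hxX _) (ys (i+1)) (hyY _)).1
    have hs2 := (hsaddle (xs (i+1)) (hxX _) (ys (i+1)) (hyY _)).2
    rw [hf, hf] at hs1
    rw [hf, hf] at hs2
    have hsad : ⟪K xstar, ys (i+1)⟫ + g xstar - h (ys (i+1))
        ≤ ⟪K (xs (i+1)), ystar⟫ + g (xs (i+1)) - h ystar := le_trans hs1 hs2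
    -- quadratic identities
    have q1 : ⟪xs i - xs (i+1), xstar - xs (i+1)⟫
        = (‖xs i - xs (i+1)‖^2 + ‖xstar - xs (i+1)‖^2 - ‖xstar - xs i‖^2)/2 := by
      rw [aux_inner_sq, norm_sub_rev (xs i) xstar]
    have q2 : ⟪ys i - ys (i+1), ystar - ys (i+1)⟫
        = (‖ys i - ys (i+1)‖^2 + ‖ystar - ys (i+1)‖^2 - ‖ystar - ys i‖^2)/2 := by
      rw [aux_inner_sq, norm_sub_rev (ys i) ystar]
    rw [q1] at h1
    rw [q2] at h2
    -- bilinear identity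
    have idb : ⟪K (xstar - xs (i+1)), ybs (i+1)⟫ - ⟪K (xbs i), ystar - ys (i+1)⟫
        + ⟪K (xs (i+1)), ystar⟫ - ⟪K xstar, ys (i+1)⟫
        = ⟪K (xbs i - xs (i+1)), ys (i+1) - ystar⟫
          + βs i * ⟪K (xstar - xs (i+1)), ys (i+1) - ys i⟫ := by
      rw [hybS i]
      simp only [map_sub, map_add, map_smul, inner_sub_left, inner_sub_right,
        inner_add_left, inner_add_right, real_inner_smul_left, real_inner_smul_right]
      ring
    -- convert τ⁻¹ * (s/2) to 1/(2τ) * s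
    have cτ : (τs i)⁻¹ * ((‖xs i - xs (i+1)‖^2 + ‖xstar - xs (i+1)‖^2 - ‖xstar - xs i‖^2)/2)
        = 1/(2*τs i) * (‖xstar - xs (i+1)‖^2 + ‖xs i - xs (i+1)‖^2 - ‖xstar - xs i‖^2) := by
      rw [one_div, mul_inv]; ring
    have cσ : (σs i)⁻¹ * ((‖ys i - ys (i+1)‖^2 + ‖ystar - ys (i+1)‖^2 - ‖ystar - ys i‖^2)/2)
        = 1/(2*σs i) * (‖ystar - ys (i+1)‖^2 + ‖ys i - ys (i+1)‖^2 - ‖ystar - ys i‖^2) := by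
      rw [one_div, mul_inv]; ring
    rw [cτ] at h1
    rw [cσ] at h2
    linarith [h1, h2, hsad, idb]
  -- Young-type bounds
  have Y1 : ∀ i, βs i * ⟪K (xstar - xs (i+1)), ys (i+1) - ys i⟫
      ≤ ‖K‖*(βs i)^2/2 * ‖xstar - xs (i+1)‖^2 + ‖K‖/2 * ‖ys i - ys (i+1)‖^2 := by
    intro i
    have hb := aux_opnorm K (xstar - xs (i+1)) (ys (i+1) - ys i)
    rw [norm_sub_rev (ys (i+1)) (ys i)] at hb
    have hb2 := mul_le_mul_of_nonneg_left hb (hβ i)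
    nlinarith [mul_nonneg hL (sq_nonneg (βs i * ‖xstar - xs (i+1)‖ - ‖ys i - ys (i+1)‖))]
  -- invariant
  have main : ∀ k,
      (1/(2*τs (k+1))) * ‖xstar - xs (k+1)‖^2
      + (1/(2*σs (k+1))) * ‖ystar - ys (k+1)‖^2
      + ∑ i ∈ Finset.range k, (1/(2*τs i) - ‖K‖) * ‖xs i - xs (i+1)‖^2
      + (1/(2*τs k)) * ‖xs k - xs (k+1)‖^2
      + ∑ i ∈ Finset.range (k+1), (1/(2*σs i) - ‖K‖) * ‖ys i - ys (i+1)‖^2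
      - ⟪K (xs k - xs (k+1)), ys (k+1) - ystar⟫
      ≤ (1/(2*τs 0)) * ‖xstar - xs 0‖^2 + (1/(2*σs 0)) * ‖ystar - ys 0‖^2 := by
    intro k
    induction k with
    | zero =>
      have k0 := key 0
      rw [hxb0] at k0
      have y1 := Y1 0
      have eA : 1/(2*τs 1) * ‖xstar - xs 1‖^2
          = (1/(2*τs 0) - ‖K‖*(βs 0)^2/2) * ‖xstar - xs 1‖^2 := by rw [hpcτ 0]
      have eB : 1/(2*σs 1) * ‖ystar - ys 1‖^2
          = (1/(2*σs 0) - ‖K‖*(1-αs 0)^2/2) * ‖ystar - ys 1‖^2 := by rw [hpcσ 0]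
      have hBnn : (0:ℝ) ≤ ‖ystar - ys 1‖^2 := sq_nonneg _
      have hbnn : (0:ℝ) ≤ ‖ys 0 - ys 1‖^2 := sq_nonneg _
      have hLa : (0:ℝ) ≤ ‖K‖*(1-αs 0)^2 := mul_nonneg hL (sq_nonneg _)
      have hLb : (0:ℝ) ≤ ‖K‖ * ‖ys 0 - ys 1‖^2 := mul_nonneg hL hbnn
      have hLaB : (0:ℝ) ≤ ‖K‖*(1-αs 0)^2 * ‖ystar - ys 1‖^2 := mul_nonneg hLa hBnn
      simp only [Finset.sum_range_succ, Finset.sum_range_zero, zero_add]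
      linarith [k0, y1, eA, eB, hLb, hLaB]
    | succ k ih =>
      have kk := key (k+1)
      have dec : ⟪K (xbs (k+1) - xs (k+2)), ys (k+2) - ystar⟫
          = ⟪K (xs (k+1) - xs (k+2)), ys (k+2) - ystar⟫
            - ⟪K (xs k - xs (k+1)), ys (k+1) - ystar⟫
            - ⟪K (xs k - xs (k+1)), ys (k+2) - ys (k+1)⟫
            + (1 - αs (k+1)) * ⟪K (xs k - xs (k+1)), ys (k+2) - ystar⟫ := by
        rw [hxbS k]
        simp only [map_sub, map_add, map_smul, inner_sub_left, inner_sub_right,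
          inner_add_left, inner_add_right, real_inner_smul_left, real_inner_smul_right]
        ring
      have y1 := Y1 (k+1)
      -- bound -⟪K(xs k - xs (k+1)), ys (k+2) - ys (k+1)⟫
      have y2 : -⟪K (xs k - xs (k+1)), ys (k+2) - ys (k+1)⟫
          ≤ ‖K‖/2 * ‖xs k - xs (k+1)‖^2 + ‖K‖/2 * ‖ys (k+1) - ys (k+2)‖^2 := by
        have hb := aux_opnorm K (xs (k+1) - xs k) (ys (k+2) - ys (k+1))
        have hneg : ⟪K (xs (k+1) - xs k), ys (k+2) - ys (k+1)⟫
            = -⟪K (xs k - xs (k+1)), ys (k+2) - ys (k+1)⟫ := by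
          simp only [map_sub, inner_sub_left]; ring
        rw [hneg, norm_sub_rev (xs (k+1)) (xs k), norm_sub_rev (ys (k+2)) (ys (k+1))] at hb
        nlinarith [mul_nonneg hL (sq_nonneg (‖xs k - xs (k+1)‖ - ‖ys (k+1) - ys (k+2)‖))]
      -- bound (1-α)⟪K(xs k - xs (k+1)), ys (k+2) - ystar⟫
      have y3 : (1 - αs (k+1)) * ⟪K (xs k - xs (k+1)), ys (k+2) - ystar⟫
          ≤ ‖K‖/2 * ‖xs k - xs (k+1)‖^2
            + ‖K‖*(1-αs (k+1))^2/2 * ‖ystar - ys (k+2)‖^2 := by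
        have hb := aux_opnorm K (xs k - xs (k+1)) (ys (k+2) - ystar)
        have hbneg := aux_opnorm K (xs (k+1) - xs k) (ys (k+2) - ystar)
        have hneg : ⟪K (xs (k+1) - xs k), ys (k+2) - ystar⟫
            = -⟪K (xs k - xs (k+1)), ys (k+2) - ystar⟫ := by
          simp only [map_sub, inner_sub_left]; ring
        rw [hneg, norm_sub_rev (xs (k+1)) (xs k)] at hbneg
        rw [norm_sub_rev (ys (k+2)) ystar] at hb hbneg
        rcases le_or_gt 0 (1 - αs (k+1)) with hc0 | hc0
        · have h5 := mul_le_mul_of_nonneg_left hb hc0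
          nlinarith [mul_nonneg hL (sq_nonneg (‖xs k - xs (k+1)‖ - (1 - αs (k+1)) * ‖ystar - ys (k+2)‖))]
        · have hcneg : (0:ℝ) ≤ -(1 - αs (k+1)) := by linarith
          have h5 := mul_le_mul_of_nonneg_left hbneg hcneg
          nlinarith [mul_nonneg hL (sq_nonneg (‖xs k - xs (k+1)‖ + (1 - αs (k+1)) * ‖ystar - ys (k+2)‖))]
      have eA : 1/(2*τs (k+2)) * ‖xstar - xs (k+2)‖^2
          = (1/(2*τs (k+1)) - ‖K‖*(βs (k+1))^2/2) * ‖xstar - xs (k+2)‖^2 := by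
        rw [hpcτ (k+1)]
      have eB : 1/(2*σs (k+2)) * ‖ystar - ys (k+2)‖^2
          = (1/(2*σs (k+1)) - ‖K‖*(1-αs (k+1))^2/2) * ‖ystar - ys (k+2)‖^2 := by
        rw [hpcσ (k+1)]
      rw [Finset.sum_range_succ, Finset.sum_range_succ (n := k+1)]
      linarith [ih, kk, dec, y1, y2, y3, eA, eB]
  -- conclude
  have hm := main k
  have T := aux_opnorm K (xs k - xs (k+1)) (ys (k+1) - ystar)
  rw [norm_sub_rev (ys (k+1)) ystar] at T
  have Y4 := aux_young (τs k) ‖K‖ ‖xs k - xs (k+1)‖ ‖ystar - ys (k+1)‖ (hτ k)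
  linarith [hm, T, Y4]
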